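/- Let S be a type, let d : S → S → ℝ be nonnegative and symmetric with d(x,x) = 0 for all x, and let s > 0. Then for all finite subsets T₁, T₂ of S, (E_s(T₁ ∪ T₂) + E_s(T₁ ∩ T₂)) − (E_s(T₁) + E_s(T₂)) = 2 · Σ over pairs (a,b) with a ∈ T₁ \ T₂, b ∈ T₂ \ T₁ and d(a,b) ≠ 0 of d(a,b)^{-s}. -/

import Mathlib

/-- The Riesz s-energy of a finite subset `X` with respect to a
dissimilarity function `d`: the sum over ordered pairs `(x, y) ∈ X × X`
with `x ≠ y` and `d x y ≠ 0` of `d x y ^ (-s)`. -/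
noncomputable def rieszEnergy {S : Type*} [DecidableEq S]
    (s : ℝ) (d : S → S → ℝ) (X : Finset S) : ℝ :=
  ∑ p ∈ X.offDiag.filter (fun p => d p.1 p.2 ≠ 0), (d p.1 p.2) ^ (-s)

noncomputable def gfun (s : ℝ) {S : Type*} (d : S → S → ℝ) (x y : S) : ℝ :=
  if d x y = 0 then 0 else d x y ^ (-s)

noncomputable def Fsum (s : ℝ) {S : Type*} (d : S → S → ℝ) (X Y : Finset S) : ℝ :=
  ∑ x ∈ X, ∑ y ∈ Y, gfun s d x y

lemma Fsum_union_left {S : Type*} [DecidableEq S] (s : ℝ) (d : S → S → ℝ)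
    {X Y : Finset S} (h : Disjoint X Y) (Z : Finset S) :
    Fsum s d (X ∪ Y) Z = Fsum s d X Z + Fsum s d Y Z := by
  simp [Fsum, Finset.sum_union h]

lemma Fsum_union_right {S : Type*} [DecidableEq S] (s : ℝ) (d : S → S → ℝ)
    (Z : Finset S) {X Y : Finset S} (h : Disjoint X Y) :
    Fsum s d Z (X ∪ Y) = Fsum s d Z X + Fsum s d Z Y := by
  simp [Fsum, Finset.sum_union h, Finset.sum_add_distrib]

lemma Fsum_symm {S : Type*} (s : ℝ) (d : S → S → ℝ) (hsymm : ∀ x y, d x y = d y x)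
    (X Y : Finset S) : Fsum s d X Y = Fsum s d Y X := by
  rw [Fsum, Finset.sum_comm]
  simp only [Fsum, gfun]
  apply Finset.sum_congr rfl
  intro y _
  apply Finset.sum_congr rfl
  intro x _
  rw [hsymm x y]

lemma energy_eq_Fsum {S : Type*} [DecidableEq S] (s : ℝ) (d : S → S → ℝ)
    (hdiag : ∀ x, d x x = 0) (X : Finset S) :
    rieszEnergy s d X = Fsum s d X X := by
  have hoff : X.offDiag = (X ×ˢ X).filter (fun a => a.1 ≠ a.2) := by
    ext a; simp [Finset.mem_offDiag, and_assoc]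
  rw [Fsum, ← Finset.sum_product', rieszEnergy, hoff, Finset.filter_filter]
  rw [Finset.sum_filter]
  apply Finset.sum_congr rfl
  intro p _
  by_cases h : d p.1 p.2 = 0
  · simp [h, gfun]
  · have hne : p.1 ≠ p.2 := by
      intro he; apply h; rw [he]; exact hdiag p.2
    simp [h, hne, gfun]

theorem rieszEnergy_union_inter_sub_add_eq_cross {S : Type*} [DecidableEq S]
    (d : S → S → ℝ) (hnonneg : ∀ x y, 0 ≤ d x y) (hsymm : ∀ x y, d x y = d y x)
    (hdiag : ∀ x, d x x = 0) (s : ℝ) (hs : 0 < s) (T₁ T₂ : Finset S) :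
    (rieszEnergy s d (T₁ ∪ T₂) + rieszEnergy s d (T₁ ∩ T₂)) -
      (rieszEnergy s d T₁ + rieszEnergy s d T₂) =
    2 * ∑ p ∈ ((T₁ \ T₂) ×ˢ (T₂ \ T₁)).filter (fun p => d p.1 p.2 ≠ 0),
          (d p.1 p.2) ^ (-s) := by
  set P := T₁ \ T₂ with hP
  set Q := T₂ \ T₁ with hQ
  set I := T₁ ∩ T₂ with hI
  have hRHS : ∑ p ∈ (P ×ˢ Q).filter (fun p => d p.1 p.2 ≠ 0), (d p.1 p.2) ^ (-s)
      = Fsum s d P Q := by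
    rw [Fsum, ← Finset.sum_product', Finset.sum_filter]
    apply Finset.sum_congr rfl
    intro p _
    by_cases h : d p.1 p.2 = 0 <;> simp [h, gfun]
  have hPI : Disjoint P I := Finset.disjoint_sdiff_inter T₁ T₂
  have hQI : Disjoint Q I := by
    simpa [hI, Finset.inter_comm] using Finset.disjoint_sdiff_inter T₂ T₁
  have hPQ : Disjoint P Q := disjoint_sdiff_sdiff
  have h1 : T₁ = P ∪ I := by
    rw [hP, hI, Finset.sdiff_union_inter]
  have h2 : T₂ = Q ∪ I := by
    rw [hQ, hI, Finset.inter_comm, Finset.sdiff_union_inter]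
  have hU : T₁ ∪ T₂ = (P ∪ I) ∪ Q := by
    rw [Finset.union_assoc, Finset.union_comm I Q, ← h2, hP,
      Finset.sdiff_union_self_eq_union]
  have hPIQ : Disjoint (P ∪ I) Q := by
    rw [Finset.disjoint_union_left]
    exact ⟨hPQ, hQI.symm⟩
  rw [energy_eq_Fsum s d hdiag, energy_eq_Fsum s d hdiag, energy_eq_Fsum s d hdiag,
    energy_eq_Fsum s d hdiag, hRHS]
  rw [hU]
  rw [h1, h2]
  rw [Fsum_union_left s d hPIQ, Fsum_union_right s d _ hPIQ,
    Fsum_union_right s d _ hPIQ,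
    Fsum_union_left s d hPI, Fsum_union_right s d _ hPI, Fsum_union_right s d _ hPI,
    Fsum_union_left s d hQI, Fsum_union_right s d _ hQI, Fsum_union_right s d _ hQI]
  rw [Fsum_union_left s d hPI Q, Fsum_union_right s d Q hPI]
  linarith [Fsum_symm s d hsymm P Q, Fsum_symm s d hsymm I Q]
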